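/- Let ρ: g → so(V) be an indecomposable representation of a real solvable Lie algebra on a Lorentzian vector space V with dim V ≥ 3. Then there exists a linear functional λ on g vanishing on [g,g] such that the weight space V_λ = {x : ρ(u)x = λ(u)x for all u} is a one-dimensional totally isotropic subspace, and V_μ = {0} for every μ ≠ λ. -/

import Mathlib

open Module Submodule

/-- Lie's theorem variant: a finite-dimensional real solvable Lie algebra acting
ℂ-linearly on a nonzero finite-dimensional complex vector space has a common
eigenvector. -/
theorem lieThmAux (k : ℕ) : ∀ (g : Type u) (_ : LieRing g) (_ : LieAlgebra ℝ g)
    (_ : FiniteDimensional ℝ g) (_ : LieAlgebra.IsSolvable g),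
    finrank ℝ g ≤ k →
    ∀ (W : Type) (_ : AddCommGroup W) (_ : Module ℂ W) (_ : FiniteDimensional ℂ W)
    (_ : Nontrivial W)
    (π : g →ₗ[ℝ] Module.End ℂ W),
    (∀ x y : g, π ⁅x, y⁆ = π x * π y - π y * π x) →
    ∃ (l : g →ₗ[ℝ] ℂ) (v : W), v ≠ 0 ∧ ∀ u : g, π u v = l u • v := by
  induction k with
  | zero =>
    intro g i1 i2 i3 i4 hk W j1 j2 j3 j4 π hπ
    obtain ⟨v, hv⟩ := exists_ne (0 : W)
    haveI : Subsingleton g := by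
      rw [← Module.finrank_zero_iff (R := ℝ)]
      omega
    refine ⟨0, v, hv, fun u => ?_⟩
    have hu : u = 0 := Subsingleton.elim u 0
    simp [hu]
  | succ k IH =>
    intro g i1 i2 i3 i4 hk W j1 j2 j3 j4 π hπ
    classical
    by_cases hk' : finrank ℝ g ≤ k
    · exact IH g i1 i2 i3 i4 hk' W j1 j2 j3 j4 π hπ
    have hpos : 0 < finrank ℝ g := by omega
    haveI : Nontrivial g := Module.nontrivial_of_finrank_pos hpos
    have hD : LieAlgebra.derivedSeries ℝ g 1 < ⊤ :=
      LieAlgebra.derivedSeries_lt_top_of_solvable ℝ g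
    set D : LieIdeal ℝ g := LieAlgebra.derivedSeries ℝ g 1 with hDdef
    have hbr_mem : ∀ y z : g, ⁅y, z⁆ ∈ D := by
      intro y z
      have hDeq : D = ⁅(⊤ : LieIdeal ℝ g), (⊤ : LieIdeal ℝ g)⁆ := by
        rw [hDdef, LieAlgebra.derivedSeries_def, LieAlgebra.derivedSeriesOfIdeal_succ,
          LieAlgebra.derivedSeriesOfIdeal_zero]
      rw [hDeq]
      exact LieSubmodule.lie_mem_lie (LieSubmodule.mem_top y) (LieSubmodule.mem_top z)
    obtain ⟨x₀, hx₀⟩ : ∃ x₀ : g, x₀ ∉ D := by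
      by_contra h
      push_neg at h
      exact hD.ne (le_antisymm le_top (fun z _ => h z))
    obtain ⟨φ, hφ⟩ : ∃ φ : Module.Dual ℝ (g ⧸ (D : Submodule ℝ g)),
        φ (Submodule.Quotient.mk x₀) ≠ 0 := by
      by_contra h
      push_neg at h
      rw [Module.forall_dual_apply_eq_zero_iff ℝ] at h
      exact hx₀ ((Submodule.Quotient.mk_eq_zero _).1 h)
    set f₁ : g →ₗ[ℝ] ℝ := φ ∘ₗ (D : Submodule ℝ g).mkQ with hf₁def
    set f₀ : g →ₗ[ℝ] ℝ := (f₁ x₀)⁻¹ • f₁ with hf₀def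
    have hf₁x₀ : f₁ x₀ ≠ 0 := hφ
    have hfx : f₀ x₀ = 1 := by
      simp only [hf₀def, LinearMap.smul_apply, smul_eq_mul]
      field_simp
    have hfD : ∀ y ∈ (D : Submodule ℝ g), f₀ y = 0 := by
      intro y hy
      have h1 : f₁ y = 0 := by
        simp only [hf₁def, LinearMap.comp_apply, Submodule.mkQ_apply]
        rw [(Submodule.Quotient.mk_eq_zero _).2 hy, map_zero]
      simp [hf₀def, h1]
    have hfbr : ∀ y z : g, f₀ ⁅y, z⁆ = 0 := fun y z => hfD _ (hbr_mem y z)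
    set x : g := x₀ with hxdef
    set H : LieSubalgebra ℝ g :=
      { LinearMap.ker f₀ with
        lie_mem' := fun {y z} _ _ => by
          simp only [Submodule.mem_carrier, LinearMap.mem_ker]
          exact hfbr y z } with hHdef
    have hmemH : ∀ y : g, y ∈ H ↔ f₀ y = 0 := fun y => Iff.rfl
    haveI hHsolv : LieAlgebra.IsSolvable H :=
      Function.Injective.lieAlgebra_isSolvable (f := H.incl) Subtype.coe_injective
    haveI hHfd : FiniteDimensional ℝ H := inferInstance
    have hHrank : finrank ℝ H ≤ k := by
      have h1 : (LinearMap.ker f₀ : Submodule ℝ g) < ⊤ := by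
        rw [lt_top_iff_ne_top]
        intro hcon
        have h2 : x₀ ∈ LinearMap.ker f₀ := hcon ▸ Submodule.mem_top
        have h3 : f₀ x₀ = 0 := h2
        rw [hfx] at h3; norm_num at h3
      have h2 : finrank ℝ (LinearMap.ker f₀) < finrank ℝ g := Submodule.finrank_lt h1.ne
      have h3 : finrank ℝ H = finrank ℝ (LinearMap.ker f₀) := rfl
      omega
    set πH : H →ₗ[ℝ] Module.End ℂ W := π ∘ₗ (H.toSubmodule).subtype with hπHdef
    have hπH : ∀ a b : H, πH ⁅a, b⁆ = πH a * πH b - πH b * πH a := by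
      intro a b
      show π ((⁅a, b⁆ : H) : g) = π (a : g) * π (b : g) - π (b : g) * π (a : g)
      rw [show ((⁅a, b⁆ : H) : g) = ⁅(a : g), (b : g)⁆ from rfl, hπ]
    obtain ⟨lH, v₁, hv₁, hv₁eig⟩ := IH H inferInstance inferInstance hHfd hHsolv hHrank W j1 j2 j3 j4 πH hπH
    have heig : ∀ u : H, π (u : g) v₁ = lH u • v₁ := fun u => hv₁eig u
    -- the weight space U for (H, lH)
    set U : Submodule ℂ W :=
      { carrier := { v | ∀ u : H, π (u : g) v = lH u • v }
        add_mem' := fun {a b} ha hb u => by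
          rw [map_add, ha u, hb u, smul_add]
        zero_mem' := fun u => by simp
        smul_mem' := fun c v hv u => by
          rw [map_smul, hv u, smul_comm] } with hUdef
    have hmemU : ∀ v : W, v ∈ U ↔ ∀ u : H, π (u : g) v = lH u • v := fun v => Iff.rfl
    have hv₁U : v₁ ∈ U := (hmemU v₁).2 heig
    have hbrH : ∀ u : H, ⁅(u : g), x⁆ ∈ H := fun u => (hmemH _).2 (hfbr _ _)
    -- commutation rule
    have hcomm : ∀ (u : H) (z : W),
        π (u : g) (π x z) = π x (π (u : g) z) + π ⁅(u : g), x⁆ z := by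
      intro u z
      have happ := congrArg (fun T : Module.End ℂ W => T z) (hπ (u : g) x)
      simp only [Module.End.mul_apply, LinearMap.sub_apply] at happ
      rw [happ]; abel
    -- KEY: lH vanishes on brackets with x (trace argument)
    have hkey : ∀ u : H, lH ⟨⁅(u : g), x⁆, hbrH u⟩ = 0 := by
      set w : ℕ → W := fun k => ((π x) ^ k) v₁ with hwdef
      have hw0 : w 0 = v₁ := rfl
      have hwsucc : ∀ k, w (k + 1) = π x (w k) := by
        intro k
        simp only [hwdef, pow_succ', Module.End.mul_apply]
      set F : ℕ → Submodule ℂ W := fun k => span ℂ (w '' Set.Iio k) with hFdef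
      have hFmono : ∀ {j k : ℕ}, j ≤ k → F j ≤ F k := by
        intro j k hjk
        exact span_mono (Set.image_mono (fun t ht => lt_of_lt_of_le ht hjk))
      have hwF : ∀ {j k : ℕ}, j < k → w j ∈ F k := by
        intro j k hjk
        exact subset_span ⟨j, hjk, rfl⟩
      have hF0 : F 0 = ⊥ := by
        simp only [hFdef]
        have h0 : Set.Iio (0 : ℕ) = ∅ := by
          ext t; simp
        rw [h0, Set.image_empty, span_empty]
      have hmapx : ∀ k, ∀ z ∈ F k, π x z ∈ F (k + 1) := by
        intro k z hz
        have h1 : Submodule.map (π x) (F k) ≤ F (k + 1) := by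
          simp only [hFdef]
          rw [Submodule.map_span]
          apply span_le.2
          rintro t ⟨s, ⟨j, hj, rfl⟩, rfl⟩
          have : π x (w j) = w (j + 1) := (hwsucc j).symm
          rw [this]
          exact SetLike.mem_coe.2 (subset_span ⟨j + 1, by simpa using Nat.succ_lt_succ hj, rfl⟩)
        exact h1 ⟨z, hz, rfl⟩
      have C1 : ∀ k, ∀ u : H, π (u : g) (w k) - lH u • w k ∈ F k := by
        intro k
        induction k with
        | zero =>
          intro u
          rw [hw0, heig u, sub_self]
          exact zero_mem _
        | succ k ih =>
          intro u
          set u' : H := ⟨⁅(u : g), x⁆, hbrH u⟩ with hu'def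
          have hsplit : π (u : g) (w (k + 1)) - lH u • w (k + 1) =
              π x (π (u : g) (w k) - lH u • w k) + π (u' : g) (w k) := by
            rw [hwsucc, hcomm u (w k), map_sub, map_smul]
            abel
          rw [hsplit]
          refine add_mem (hmapx k _ (ih u)) ?_
          have h2 : π (u' : g) (w k) =
              (π (u' : g) (w k) - lH u' • w k) + lH u' • w k := by abel
          rw [h2]
          exact add_mem (hFmono (Nat.le_succ k) (ih u'))
            (smul_mem _ _ (hwF (Nat.lt_succ_self k)))
      have C2 : ∀ (k) (u : H), π (u : g) (w k) ∈ F (k + 1) := by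
        intro k u
        have h2 : π (u : g) (w k) =
            (π (u : g) (w k) - lH u • w k) + lH u • w k := by abel
        rw [h2]
        exact add_mem (hFmono (Nat.le_succ k) (C1 k u))
          (smul_mem _ _ (hwF (Nat.lt_succ_self k)))
      have hstab : ∃ k, w k ∈ F k := by
        by_contra hcon
        push_neg at hcon
        have hchain : ∀ k, k ≤ finrank ℂ (F k) := by
          intro k
          induction k with
          | zero => omega
          | succ k ih =>
            have hlt : F k < F (k + 1) := by
              refine lt_of_le_of_ne (hFmono (Nat.le_succ k)) (fun he => hcon k ?_)
              rw [he]
              exact hwF (Nat.lt_succ_self k)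
            have := Submodule.finrank_lt_finrank_of_lt hlt
            omega
        have h1 := hchain (finrank ℂ W + 1)
        have h2 := Submodule.finrank_le (F (finrank ℂ W + 1))
        omega
      set m := Nat.find hstab with hmdef
      have hm : w m ∈ F m := Nat.find_spec hstab
      have hm0 : 0 < m := by
        rcases Nat.eq_zero_or_pos m with h | h
        · exfalso
          have h2 := hm
          rw [h, hF0] at h2
          exact hv₁ (by simpa [hw0] using h2)
        · exact h
      have hFsucc_le : F (m + 1) ≤ F m := by
        simp only [hFdef]
        apply span_le.2
        rintro t ⟨j, hj, rfl⟩
        rcases Nat.lt_or_ge j m with h | h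
        · exact SetLike.mem_coe.2 (hwF h)
        · have hjm : j = m := by
            simp only [Set.mem_Iio] at hj
            omega
          subst hjm
          exact SetLike.mem_coe.2 hm
      have hNx : ∀ z ∈ F m, π x z ∈ F m := fun z hz => hFsucc_le (hmapx m z hz)
      have hNu : ∀ u : H, ∀ z ∈ F m, π (u : g) z ∈ F m := by
        intro u z hz
        have h1 : Submodule.map (π (u : g)) (F m) ≤ F m := by
          conv_lhs => rw [hFdef]
          rw [Submodule.map_span]
          apply span_le.2
          rintro t ⟨s, ⟨j, hj, rfl⟩, rfl⟩
          simp only [Set.mem_Iio] at hj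
          exact SetLike.mem_coe.2 (hFmono (show j + 1 ≤ m by omega) (C2 j u))
        exact h1 ⟨z, hz, rfl⟩
      set Ax : Module.End ℂ (F m) := (π x).restrict hNx with hAxdef
      set Au : H → Module.End ℂ (F m) := fun u => (π (u : g)).restrict (hNu u) with hAudef
      have hrestr_br : ∀ u : H,
          Au ⟨⁅(u : g), x⁆, hbrH u⟩ = Au u * Ax - Ax * Au u := by
        intro u
        apply LinearMap.ext
        intro v
        apply Subtype.ext
        have h1 : ((Au ⟨⁅(u : g), x⁆, hbrH u⟩) v : W) = π ⁅(u : g), x⁆ (v : W) := rfl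
        have h2 : (((Au u * Ax - Ax * Au u)) v : W) =
            π (u : g) (π x (v : W)) - π x (π (u : g) (v : W)) := rfl
        rw [h1, h2]
        have happ := congrArg (fun T : Module.End ℂ W => T (v : W)) (hπ (u : g) x)
        simpa using happ
      haveI : Nontrivial (F m) := by
        refine nontrivial_of_ne ⟨v₁, ?_⟩ 0 ?_
        · have := hwF hm0
          rwa [hw0] at this
        · simp [Submodule.mk_eq_zero, hv₁]
      have hfr : 0 < finrank ℂ (F m) := finrank_pos
      have htr0 : ∀ u : H,
          LinearMap.trace ℂ (F m) (Au u) = (finrank ℂ (F m) : ℂ) * lH u := by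
        intro u
        set Su : Module.End ℂ W := π (u : g) - lH u • 1 with hSudef
        have hSuapp : ∀ z : W, Su z = π (u : g) z - lH u • z := by
          intro z
          simp [hSudef]
        have hSuw : ∀ j, Su (w j) ∈ F j := by
          intro j
          rw [hSuapp]
          exact C1 j u
        have hSumap : ∀ k, ∀ z ∈ F (k + 1), Su z ∈ F k := by
          intro k z hz
          have h1 : Submodule.map Su (F (k + 1)) ≤ F k := by
            conv_lhs => rw [hFdef]
            rw [Submodule.map_span]
            apply span_le.2
            rintro t ⟨s, ⟨j, hj, rfl⟩, rfl⟩
            simp only [Set.mem_Iio] at hj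
            exact SetLike.mem_coe.2 (hFmono (show j ≤ k by omega) (hSuw j))
          exact h1 ⟨z, hz, rfl⟩
        have hSpow : ∀ k, ∀ z ∈ F k, (Su ^ k) z = 0 := by
          intro k
          induction k with
          | zero =>
            intro z hz
            rw [hF0] at hz
            simp [(Submodule.mem_bot ℂ).1 hz]
          | succ k ih =>
            intro z hz
            rw [pow_succ, Module.End.mul_apply]
            exact ih _ (hSumap k z hz)
        have hSuN : ∀ z ∈ F m, Su z ∈ F m := by
          intro z hz
          rw [hSuapp]
          exact sub_mem (hNu u z hz) (smul_mem _ _ hz)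
        set Nu : Module.End ℂ (F m) := Su.restrict hSuN with hNudef
        have hpowcoe : ∀ (k) (v : F m), (((Nu ^ k) v : F m) : W) = (Su ^ k) (v : W) := by
          intro k
          induction k with
          | zero => intro v; simp
          | succ k ih =>
            intro v
            rw [pow_succ, Module.End.mul_apply, pow_succ, Module.End.mul_apply]
            rw [ih (Nu v)]
            rfl
        have hNnil : Nu ^ m = 0 := by
          apply LinearMap.ext
          intro v
          apply Subtype.ext
          rw [hpowcoe m v]
          simpa using hSpow m (v : W) v.2
        have hAuNu : Au u = lH u • 1 + Nu := by
          apply LinearMap.ext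
          intro v
          apply Subtype.ext
          have h1 : ((Au u v : F m) : W) = π (u : g) (v : W) := rfl
          have h2 : (((lH u • 1 + Nu) v : F m) : W) = lH u • (v : W) + Su (v : W) := rfl
          rw [h1, h2, hSuapp]
          abel
        rw [hAuNu, map_add, map_smul, LinearMap.trace_one]
        have htrN : LinearMap.trace ℂ (F m) Nu = 0 := by
          have h1 : IsNilpotent Nu := ⟨m, hNnil⟩
          have h2 := LinearMap.isNilpotent_trace_of_isNilpotent h1
          exact h2.eq_zero
        rw [htrN, add_zero, smul_eq_mul, mul_comm]
      intro u
      have h1 := htr0 ⟨⁅(u : g), x⁆, hbrH u⟩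
      rw [hrestr_br u, map_sub, LinearMap.trace_mul_comm, sub_self] at h1
      have h2 : (finrank ℂ (F m) : ℂ) ≠ 0 := by
        exact_mod_cast Nat.cast_ne_zero.2 hfr.ne'
      exact (mul_eq_zero.1 h1.symm).resolve_left h2
    -- U is invariant under π x
    have hUx : ∀ v ∈ U, π x v ∈ U := by
      intro v hv
      rw [hmemU]
      intro u
      rw [hcomm u v, (hmemU v).1 hv u]
      have h1 : π ⁅(u : g), x⁆ v = π ((⟨⁅(u : g), x⁆, hbrH u⟩ : H) : g) v := rfl
      rw [h1, (hmemU v).1 hv ⟨⁅(u : g), x⁆, hbrH u⟩, hkey u, map_smul, zero_smul, add_zero]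
    haveI : Nontrivial U := by
      refine nontrivial_of_ne ⟨v₁, hv₁U⟩ 0 ?_
      simp [Submodule.mk_eq_zero, hv₁]
    set AxU : Module.End ℂ U := (π x).restrict hUx with hAxUdef
    obtain ⟨c, hc⟩ := Module.End.exists_eigenvalue AxU
    obtain ⟨v0, hv0⟩ := hc.exists_hasEigenvector
    have hv0ne : (v0 : W) ≠ 0 := by
      intro h
      exact hv0.right (Subtype.ext h)
    have heigx : π x (v0 : W) = c • (v0 : W) := by
      have h1 := hv0.apply_eq_smul
      have h2 : ((AxU v0 : U) : W) = π x (v0 : W) := rfl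
      rw [← h2, h1]
      rfl
    -- assemble the functional
    have hPmem : ∀ u : g, u - f₀ u • x ∈ H := by
      intro u
      rw [hmemH]
      simp [map_sub, map_smul, hfx]
    set P : g →ₗ[ℝ] H :=
      { toFun := fun u => ⟨u - f₀ u • x, hPmem u⟩
        map_add' := fun a b => by
          apply Subtype.ext
          show a + b - f₀ (a + b) • x = (a - f₀ a • x) + (b - f₀ b • x)
          rw [map_add, add_smul]
          abel
        map_smul' := fun r a => by
          apply Subtype.ext
          show r • a - f₀ (r • a) • x = r • (a - f₀ a • x)
          rw [map_smul, smul_sub, smul_assoc] } with hPdef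
    have hPco : ∀ u : g, ((P u : H) : g) = u - f₀ u • x := fun u => rfl
    refine ⟨lH ∘ₗ P + f₀.smulRight c, (v0 : W), hv0ne, ?_⟩
    intro u
    have hdecomp : u = ((P u : H) : g) + f₀ u • x := by
      rw [hPco]
      abel
    have h1 : π u = π ((P u : H) : g) + f₀ u • π x := by
      conv_lhs => rw [hdecomp]
      rw [map_add, map_smul]
    have hv0U : (v0 : W) ∈ U := v0.2
    calc π u (v0 : W)
        = π ((P u : H) : g) (v0 : W) + f₀ u • (π x (v0 : W)) := by
          rw [h1]; rfl
      _ = lH (P u) • (v0 : W) + f₀ u • (c • (v0 : W)) := by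
          rw [(hmemU _).1 hv0U (P u), heigx]
      _ = (lH (P u) + f₀ u • c) • (v0 : W) := by
          rw [add_smul, smul_assoc]
      _ = ((lH ∘ₗ P + f₀.smulRight c) u) • (v0 : W) := rfl

attribute [local instance 100] LieRing.ofAssociativeRing

set_option maxHeartbeats 2000000 in
/-- An indecomposable representation of a real solvable Lie algebra by
skew-symmetric endomorphisms on a Lorentzian space of dimension ≥ 3 admits a closed
functional `λ` whose weight space is one-dimensional and totally isotropic, while all
other weight spaces vanish. -/
theorem indecomposable_lorentzian_rep_dim_ge_three
    (g : Type*) [LieRing g] [LieAlgebra ℝ g] [FiniteDimensional ℝ g]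
    [LieAlgebra.IsSolvable g]
    (V : Type*) [AddCommGroup V] [Module ℝ V]
    (B : LinearMap.BilinForm ℝ V) (hBsymm : ∀ x y, B x y = B y x)
    (n : ℕ) (hn : 3 ≤ n) (b : Module.Basis (Fin n) ℝ V)
    (hb : ∀ i j, B (b i) (b j) =
      if i = j then (if (i : ℕ) = 0 then (-1 : ℝ) else 1) else 0)
    (ρ : g →ₗ⁅ℝ⁆ Module.End ℝ V)
    (hskew : ∀ (u : g) (x y : V), B (ρ u x) y = -B x (ρ u y))
    (hind : ∀ W : Submodule ℝ V, (∀ (u : g), ∀ x ∈ W, ρ u x ∈ W) →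
      (∀ x ∈ W, (∀ y ∈ W, B x y = 0) → x = 0) → W = ⊥ ∨ W = ⊤) :
    ∃ l : g →ₗ[ℝ] ℝ, (∀ x y : g, l ⁅x, y⁆ = 0) ∧
      ∃ e : V, e ≠ 0 ∧ B e e = 0 ∧
        (∀ u : g, ρ u e = l u • e) ∧
        (∀ x : V, (∀ u : g, ρ u x = l u • x) → ∃ c : ℝ, x = c • e) ∧
        (∀ mu : g →ₗ[ℝ] ℝ, mu ≠ l →
          ∀ x : V, (∀ u : g, ρ u x = mu u • x) → x = 0) := by
  classical
  haveI : FiniteDimensional ℝ V := Module.Finite.of_basis b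
  have hdimV : finrank ℝ V = n := by
    rw [finrank_eq_card_basis b, Fintype.card_fin]
  set i0 : Fin n := ⟨0, by omega⟩ with hi0def
  -- expansion of the form in coordinates
  have hBbasis : ∀ (i : Fin n) (y : V),
      B (b i) y = (if (i : ℕ) = 0 then (-1 : ℝ) else 1) * b.repr y i := by
    intro i y
    conv_lhs => rw [← b.sum_repr y]
    rw [map_sum]
    simp only [map_smul, hb, smul_eq_mul]
    rw [Finset.sum_congr rfl (fun j _ => by
      rw [mul_ite, mul_zero] : ∀ j ∈ Finset.univ,
        b.repr y j * (if i = j then (if (i : ℕ) = 0 then (-1:ℝ) else 1) else 0) =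
        if i = j then b.repr y j * (if (i : ℕ) = 0 then (-1:ℝ) else 1) else 0)]
    rw [Finset.sum_ite_eq]
    simp [mul_comm]
  have hBform : ∀ x y : V, B x y =
      ∑ i, b.repr x i * ((if (i : ℕ) = 0 then (-1 : ℝ) else 1) * b.repr y i) := by
    intro x y
    conv_lhs => rw [← b.sum_repr x]
    rw [map_sum, LinearMap.sum_apply]
    apply Finset.sum_congr rfl
    intro i _
    rw [map_smul, LinearMap.smul_apply, smul_eq_mul, hBbasis]
  have hsplit : ∀ z w : V, B z w = -(b.repr z i0 * b.repr w i0) +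
      ∑ i ∈ Finset.univ.erase i0, b.repr z i * b.repr w i := by
    intro z w
    rw [hBform, ← Finset.add_sum_erase _ _ (Finset.mem_univ i0)]
    congr 1
    · simp [hi0def]
    · apply Finset.sum_congr rfl
      intro i hi
      have hne : (i : ℕ) ≠ 0 := by
        intro h
        exact (Finset.mem_erase.1 hi).1 (Fin.ext h)
      simp [hne]
  -- the Lorentz lemma : pairwise orthogonal isotropic vectors are parallel
  have hlor : ∀ x y : V, B x x = 0 → B y y = 0 → B x y = 0 → x ≠ 0 →
      ∃ c : ℝ, y = c • x := by
    intro x y hxx hyy hxy hx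
    have h1 : ∑ i ∈ Finset.univ.erase i0, b.repr x i * b.repr x i
        = b.repr x i0 * b.repr x i0 := by
      have := hsplit x x
      rw [hxx] at this
      linarith
    have h2 : ∑ i ∈ Finset.univ.erase i0, b.repr y i * b.repr y i
        = b.repr y i0 * b.repr y i0 := by
      have := hsplit y y
      rw [hyy] at this
      linarith
    have h3 : ∑ i ∈ Finset.univ.erase i0, b.repr x i * b.repr y i
        = b.repr x i0 * b.repr y i0 := by
      have := hsplit x y
      rw [hxy] at this
      linarith
    have hp0 : b.repr x i0 ≠ 0 := by
      intro h0
      apply hx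
      have hsum : ∑ i ∈ Finset.univ.erase i0, b.repr x i * b.repr x i = 0 := by
        rw [h1, h0, zero_mul]
      have hall : ∀ i, b.repr x i = 0 := by
        intro i
        by_cases h : i = i0
        · rw [h]; exact h0
        · have := (Finset.sum_eq_zero_iff_of_nonneg
            (fun i _ => mul_self_nonneg (b.repr x i))).1 hsum i
            (Finset.mem_erase.2 ⟨h, Finset.mem_univ i⟩)
          exact mul_self_eq_zero.1 this
      conv_lhs => rw [← b.sum_repr x]
      simp [hall]
    have hzz : ∑ i ∈ Finset.univ.erase i0,
        (b.repr x i0 * b.repr y i - b.repr y i0 * b.repr x i) *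
        (b.repr x i0 * b.repr y i - b.repr y i0 * b.repr x i) = 0 := by
      have hterm : ∀ i : Fin n,
          (b.repr x i0 * b.repr y i - b.repr y i0 * b.repr x i) *
          (b.repr x i0 * b.repr y i - b.repr y i0 * b.repr x i) =
          b.repr x i0 * b.repr x i0 * (b.repr y i * b.repr y i)
          - 2 * (b.repr x i0 * b.repr y i0) * (b.repr x i * b.repr y i)
          + b.repr y i0 * b.repr y i0 * (b.repr x i * b.repr x i) := by
        intro i; ring
      rw [Finset.sum_congr rfl (fun i _ => hterm i)]
      rw [Finset.sum_add_distrib, Finset.sum_sub_distrib,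
        ← Finset.mul_sum, ← Finset.mul_sum, ← Finset.mul_sum, h1, h2, h3]
      ring
    have hzero : ∀ i, b.repr x i0 * b.repr y i - b.repr y i0 * b.repr x i = 0 := by
      intro i
      by_cases h : i = i0
      · rw [h]; ring
      · have := (Finset.sum_eq_zero_iff_of_nonneg
          (fun i _ => mul_self_nonneg _)).1 hzz i
          (Finset.mem_erase.2 ⟨h, Finset.mem_univ i⟩)
        exact mul_self_eq_zero.1 this
    refine ⟨b.repr y i0 / b.repr x i0, ?_⟩
    apply b.repr.injective
    ext i
    rw [map_smul]
    have := hzero i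
    simp only [Finsupp.smul_apply, smul_eq_mul]
    field_simp
    linarith [hzero i]
  -- every weight vector is isotropic
  have hiso : ∀ (mu : g → ℝ) (x : V), (∀ u, ρ u x = mu u • x) → B x x = 0 := by
    intro mu x hmu
    by_contra hBxx
    have hx0 : x ≠ 0 := by
      intro h
      rw [h] at hBxx
      simp at hBxx
    have hWinv : ∀ (u : g), ∀ z ∈ (Submodule.span ℝ {x} : Submodule ℝ V),
        ρ u z ∈ Submodule.span ℝ {x} := by
      intro u z hz
      obtain ⟨t, rfl⟩ := Submodule.mem_span_singleton.1 hz
      rw [map_smul, hmu u]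
      exact Submodule.smul_mem _ _ (Submodule.smul_mem _ _ (Submodule.mem_span_singleton_self x))
    have hWnd : ∀ z ∈ (Submodule.span ℝ {x} : Submodule ℝ V),
        (∀ y ∈ (Submodule.span ℝ {x} : Submodule ℝ V), B z y = 0) → z = 0 := by
      intro z hz hperp
      obtain ⟨t, rfl⟩ := Submodule.mem_span_singleton.1 hz
      have := hperp x (Submodule.mem_span_singleton_self x)
      rw [map_smul, LinearMap.smul_apply, smul_eq_mul] at this
      rcases mul_eq_zero.1 this with h | h
      · rw [h, zero_smul]
      · exact absurd h hBxx
    rcases hind _ hWinv hWnd with h | h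
    · exact hx0 (Submodule.span_singleton_eq_bot.1 h)
    · have hfr : finrank ℝ (Submodule.span ℝ ({x} : Set V)) = 1 :=
        finrank_span_singleton hx0
      rw [h, finrank_top, hdimV] at hfr
      omega
  -- spans of two vectors have finrank at most 2
  have hpair2 : ∀ a c : V, finrank ℝ (Submodule.span ℝ ({a, c} : Set V)) ≤ 2 := by
    intro a c
    refine (finrank_span_le_card _).trans ?_
    rw [Set.toFinset_insert, Set.toFinset_singleton]
    exact (Finset.card_insert_le _ _).trans (by simp)
  -- ==== Part 2: complexification and the invariant small subspace ====
  haveI : NeZero n := ⟨by omega⟩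
  set M : g → Matrix (Fin n) (Fin n) ℝ := fun u => LinearMap.toMatrix b b (ρ u) with hMdef
  set cmap : Matrix (Fin n) (Fin n) ℝ → Matrix (Fin n) (Fin n) ℂ :=
    fun A => A.map Complex.ofRealHom with hcmapdef
  have hcmap_add : ∀ A C, cmap (A + C) = cmap A + cmap C := by
    intro A C
    ext i j
    simp [hcmapdef]
  have hcmap_sub : ∀ A C, cmap (A - C) = cmap A - cmap C := by
    intro A C
    ext i j
    simp [hcmapdef]
  have hcmap_smul : ∀ (r : ℝ) A, cmap (r • A) = (r : ℂ) • cmap A := by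
    intro r A
    ext i j
    simp [hcmapdef]
  have hcmap_mul : ∀ A C, cmap (A * C) = cmap A * cmap C := by
    intro A C
    simp [hcmapdef]
  set π : g →ₗ[ℝ] Module.End ℂ (Fin n → ℂ) :=
    { toFun := fun u => Matrix.toLin' (cmap (M u))
      map_add' := fun u v => by
        have h1 : M (u + v) = M u + M v := by
          simp only [hMdef, ρ.map_add, map_add]
        show Matrix.toLin' (cmap (M (u + v))) = Matrix.toLin' (cmap (M u)) + Matrix.toLin' (cmap (M v))
        rw [h1, hcmap_add, map_add]
      map_smul' := fun r u => by
        have h1 : M (r • u) = r • M u := by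
          simp only [hMdef, ρ.map_smul, map_smul]
        show Matrix.toLin' (cmap (M (r • u))) = (RingHom.id ℝ) r • Matrix.toLin' (cmap (M u))
        rw [h1, hcmap_smul, map_smul]
        rfl } with hπdef
  have hπbr : ∀ x y : g, π ⁅x, y⁆ = π x * π y - π y * π x := by
    intro x y
    have h1 : M ⁅x, y⁆ = M x * M y - M y * M x := by
      simp only [hMdef]
      rw [ρ.map_lie, Ring.lie_def, map_sub, LinearMap.toMatrix_mul, LinearMap.toMatrix_mul]
    show Matrix.toLin' (cmap (M ⁅x, y⁆)) = _
    rw [h1, hcmap_sub, hcmap_mul, hcmap_mul, map_sub, Matrix.toLin'_mul, Matrix.toLin'_mul]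
    rfl
  obtain ⟨l, v, hv0, hveig⟩ := lieThmAux (finrank ℝ g) g inferInstance inferInstance
    inferInstance inferInstance le_rfl (Fin n → ℂ) inferInstance inferInstance
    inferInstance inferInstance π hπbr
  -- real and imaginary parts
  set vre : Fin n → ℝ := fun i => (v i).re with hvredef
  set vim : Fin n → ℝ := fun i => (v i).im with hvimdef
  have hcoord : ∀ u : g, ∀ i, ∑ j, ((M u i j : ℝ) : ℂ) * v j = l u * v i := by
    intro u i
    have h1 := hveig u
    have h2 : Matrix.toLin' (cmap (M u)) v = l u • v := h1
    rw [Matrix.toLin'_apply] at h2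
    have h3 := congrFun h2 i
    simpa [Matrix.mulVec, dotProduct, hcmapdef, Matrix.map_apply] using h3
  have hre : ∀ u : g, ∀ i, ∑ j, M u i j * vre j = (l u).re * vre i - (l u).im * vim i := by
    intro u i
    have h1 := congrArg Complex.re (hcoord u i)
    rw [Complex.re_sum] at h1
    simp only [Complex.mul_re, Complex.ofReal_re, Complex.ofReal_im, zero_mul, sub_zero] at h1
    simpa [hvredef, hvimdef] using h1
  have him : ∀ u : g, ∀ i, ∑ j, M u i j * vim j = (l u).re * vim i + (l u).im * vre i := by
    intro u i
    have h1 := congrArg Complex.im (hcoord u i)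
    rw [Complex.im_sum] at h1
    simp only [Complex.mul_im, Complex.ofReal_re, Complex.ofReal_im, zero_mul, add_zero] at h1
    simpa [hvredef, hvimdef, add_comm, mul_comm] using h1
  set A1 : V := b.equivFun.symm vre with hA1def
  set A2 : V := b.equivFun.symm vim with hA2def
  have hreprA1 : ∀ i, b.repr A1 i = vre i := by
    intro i
    rw [hA1def, ← b.equivFun_apply, LinearEquiv.apply_symm_apply]
  have hreprA2 : ∀ i, b.repr A2 i = vim i := by
    intro i
    rw [hA2def, ← b.equivFun_apply, LinearEquiv.apply_symm_apply]
  have hmulvec : ∀ (u : g) (z : V) (i : Fin n),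
      b.repr (ρ u z) i = ∑ j, M u i j * b.repr z j := by
    intro u z i
    have h1 := LinearMap.toMatrix_mulVec_repr b b (ρ u) z
    have h2 := congrFun h1 i
    rw [← h2]
    simp [Matrix.mulVec, dotProduct, hMdef]
  have hrhoA1 : ∀ u : g, ρ u A1 = (l u).re • A1 - (l u).im • A2 := by
    intro u
    apply b.repr.injective
    ext i
    rw [map_sub, map_smul, map_smul]
    simp only [Finsupp.sub_apply, Finsupp.smul_apply, smul_eq_mul]
    rw [hmulvec u A1 i, Finset.sum_congr rfl (fun j _ => by rw [hreprA1 j]),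
      hreprA1 i, hreprA2 i]
    exact hre u i
  have hrhoA2 : ∀ u : g, ρ u A2 = (l u).re • A2 + (l u).im • A1 := by
    intro u
    apply b.repr.injective
    ext i
    rw [map_add, map_smul, map_smul]
    simp only [Finsupp.add_apply, Finsupp.smul_apply, smul_eq_mul]
    rw [hmulvec u A2 i, Finset.sum_congr rfl (fun j _ => by rw [hreprA2 j]),
      hreprA2 i, hreprA1 i]
    exact him u i
  -- the small invariant subspace
  set U : Submodule ℝ V := Submodule.span ℝ ({A1, A2} : Set V) with hUdef
  have hA1U : A1 ∈ U := Submodule.subset_span (by simp)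
  have hA2U : A2 ∈ U := Submodule.subset_span (by simp)
  have hUinv : ∀ u : g, ∀ z ∈ U, ρ u z ∈ U := by
    intro u z hz
    obtain ⟨s, t, rfl⟩ := Submodule.mem_span_pair.1 hz
    rw [map_add, map_smul, map_smul, hrhoA1 u, hrhoA2 u]
    apply Submodule.add_mem
    · exact Submodule.smul_mem _ _ (Submodule.sub_mem _
        (Submodule.smul_mem _ _ hA1U) (Submodule.smul_mem _ _ hA2U))
    · exact Submodule.smul_mem _ _ (Submodule.add_mem _
        (Submodule.smul_mem _ _ hA2U) (Submodule.smul_mem _ _ hA1U))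
  have hUne : U ≠ ⊥ := by
    intro hUbot
    apply hv0
    have hA1z : A1 = 0 := by
      have : A1 ∈ (⊥ : Submodule ℝ V) := hUbot ▸ hA1U
      simpa using this
    have hA2z : A2 = 0 := by
      have : A2 ∈ (⊥ : Submodule ℝ V) := hUbot ▸ hA2U
      simpa using this
    funext i
    have h1 : vre i = 0 := by
      rw [← hreprA1 i, hA1z, map_zero]
      rfl
    have h2 : vim i = 0 := by
      rw [← hreprA2 i, hA2z, map_zero]
      rfl
    apply Complex.ext
    · simpa [hvredef] using h1
    · simpa [hvimdef] using h2
  have hUnetop : U ≠ ⊤ := by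
    intro hUtop
    have h1 := hpair2 A1 A2
    rw [← hUdef, hUtop, finrank_top, hdimV] at h1
    omega
  -- U must be degenerate, giving an isotropic invariant vector e
  have hUdeg : ¬(∀ z ∈ U, (∀ y ∈ U, B z y = 0) → z = 0) := by
    intro hnd
    rcases hind U hUinv hnd with h | h
    · exact hUne h
    · exact hUnetop h
  push_neg at hUdeg
  obtain ⟨e, heU, heperp, he0⟩ := hUdeg
  have hBee : B e e = 0 := heperp e heU
  -- the radical line is invariant: ρ u e is parallel to e
  have heline : ∀ u : g, ∃ c : ℝ, ρ u e = c • e := by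
    intro u
    have h1 : ρ u e ∈ U := hUinv u e heU
    have h2 : ∀ y ∈ U, B (ρ u e) y = 0 := by
      intro y hy
      rw [hskew]
      have := heperp (ρ u y) (hUinv u y hy)
      rw [this, neg_zero]
    have h3 : B (ρ u e) (ρ u e) = 0 := h2 _ h1
    have h4 : B e (ρ u e) = 0 := heperp _ h1
    exact hlor e (ρ u e) hBee h3 h4 he0
  -- ==== Part 3: the weight functional and conclusions ====
  have hcan : ∀ a a' : ℝ, a • e = a' • e → a = a' := by
    intro a a' h
    have h1 : (a - a') • e = 0 := by rw [sub_smul, h, sub_self]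
    rcases smul_eq_zero.1 h1 with h2 | h2
    · linarith [sub_eq_zero.1 h2]
    · exact absurd h2 he0
  set lf : g → ℝ := fun u => Classical.choose (heline u) with hlfdef
  have hlf : ∀ u : g, ρ u e = lf u • e := fun u => Classical.choose_spec (heline u)
  set lmap : g →ₗ[ℝ] ℝ :=
    { toFun := lf
      map_add' := fun u w => by
        apply hcan
        rw [← hlf (u + w), map_add ρ, LinearMap.add_apply, hlf u, hlf w, add_smul]
      map_smul' := fun r u => by
        apply hcan
        show (lf (r • u)) • e = ((RingHom.id ℝ) r • lf u) • e
        rw [← hlf (r • u), map_smul ρ, LinearMap.smul_apply, hlf u, smul_smul,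
          RingHom.id_apply, smul_eq_mul] } with hlmapdef
  have hlmap : ∀ u : g, lmap u = lf u := fun u => rfl
  have hbr0 : ∀ x y : g, lmap ⁅x, y⁆ = 0 := by
    intro x y
    have h1 : ρ ⁅x, y⁆ e = 0 := by
      rw [ρ.map_lie, Ring.lie_def, LinearMap.sub_apply, Module.End.mul_apply,
        Module.End.mul_apply, hlf x, hlf y, map_smul, map_smul, hlf x, hlf y,
        smul_smul, smul_smul, mul_comm, sub_self]
    apply hcan
    rw [hlmap, ← hlf ⁅x, y⁆, h1, zero_smul]
  refine ⟨lmap, hbr0, e, he0, hBee, fun u => (hlmap u) ▸ hlf u, ?_, ?_⟩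
  · -- the weight space of lmap is the line through e
    intro x hx
    have hBxx : B x x = 0 := hiso (fun u => lmap u) x hx
    have hxe : ∀ u : g, ρ u (x + e) = lmap u • (x + e) := by
      intro u
      rw [map_add, hx u, hlmap, hlf u, smul_add]
    have hsum : B (x + e) (x + e) = 0 := hiso (fun u => lmap u) (x + e) hxe
    have hBex : B e x = 0 := by
      have hexp : B (x + e) (x + e) = B x x + B x e + (B e x + B e e) := by
        simp only [map_add, LinearMap.add_apply]
        ring
      have hsymm : B x e = B e x := hBsymm x e
      rw [hsum, hBxx, hBee, hsymm] at hexp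
      linarith
    exact hlor e x hBee hBxx hBex he0
  · -- all other weight spaces vanish
    intro mu hmune x hx
    by_contra hx0
    have hBxx : B x x = 0 := hiso (fun u => mu u) x hx
    by_cases hBex : B e x = 0
    · obtain ⟨c, hc⟩ := hlor e x hBee hBxx hBex he0
      have hcne : c ≠ 0 := by
        intro h
        rw [h, zero_smul] at hc
        exact hx0 hc
      apply hmune
      apply LinearMap.ext
      intro u
      have h1 : ρ u x = (c * lf u) • e := by
        rw [hc, map_smul, hlf u, smul_smul]
      have h2 : ρ u x = (mu u * c) • e := by
        rw [hx u, hc, smul_smul]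
      have h3 : mu u * c = c * lf u := hcan _ _ (h2.symm.trans h1)
      have h4 : mu u = lf u := by
        have := mul_right_cancel₀ hcne (by linarith [h3] : mu u * c = lf u * c)
        exact this
      rw [hlmap]
      exact h4
    · set P : Submodule ℝ V := Submodule.span ℝ ({e, x} : Set V) with hPdef
      have heP : e ∈ P := Submodule.subset_span (by simp)
      have hxP : x ∈ P := Submodule.subset_span (by simp)
      have hPinv : ∀ u : g, ∀ z ∈ P, ρ u z ∈ P := by
        intro u z hz
        obtain ⟨s, t, rfl⟩ := Submodule.mem_span_pair.1 hz
        rw [map_add, map_smul, map_smul, hlf u, hx u]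
        exact Submodule.add_mem _ (Submodule.smul_mem _ _ (Submodule.smul_mem _ _ heP))
          (Submodule.smul_mem _ _ (Submodule.smul_mem _ _ hxP))
      have hPnd : ∀ z ∈ P, (∀ y ∈ P, B z y = 0) → z = 0 := by
        intro z hz hperp
        obtain ⟨s, t, rfl⟩ := Submodule.mem_span_pair.1 hz
        have h1 := hperp x hxP
        have h2 := hperp e heP
        simp only [map_add, map_smul, LinearMap.add_apply, LinearMap.smul_apply,
          smul_eq_mul] at h1 h2
        rw [hBxx] at h1
        rw [hBee] at h2
        have hxe' : B x e = B e x := hBsymm x e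
        rw [hxe'] at h2
        have hs : s = 0 := by
          have hh : s * B e x = 0 := by linarith
          rcases mul_eq_zero.1 hh with h | h
          · exact h
          · exact absurd h hBex
        have ht : t = 0 := by
          have hh : t * B e x = 0 := by linarith
          rcases mul_eq_zero.1 hh with h | h
          · exact h
          · exact absurd h hBex
        rw [hs, ht, zero_smul, zero_smul, add_zero]
      rcases hind P hPinv hPnd with h | h
      · apply he0
        have : e ∈ (⊥ : Submodule ℝ V) := h ▸ heP
        simpa using this
      · have h1 := hpair2 e x
        rw [← hPdef, h, finrank_top, hdimV] at h1
        omega
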